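/- For α < −1 and ξ ≠ 0, exactly one of the two functions exp(±ξ x^(1+α)/(1+α)) diverges to +∞ as x → 0⁺ (namely the one with sign matching −sign(ξ(1+α))), and consequently it is not the case that both solutions belong to L²((0,1), x^(−α) dx). -/
import Mathlib


open Real Set MeasureTheory Filter

lemma aux_tendsto_rpow (α : ℝ) (hα : α < -1) :
    Tendsto (fun x : ℝ => x ^ (1 + α)) (nhdsWithin 0 (Ioi 0)) atTop := by
  have h : Tendsto (fun x : ℝ => (x⁻¹) ^ (-(1 + α))) (nhdsWithin 0 (Ioi 0)) atTop :=
    (tendsto_rpow_atTop (by linarith)).comp tendsto_inv_nhdsGT_zero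
  refine h.congr' ?_
  filter_upwards [self_mem_nhdsWithin] with x (hx : 0 < x)
  rw [← Real.rpow_neg_one x, ← Real.rpow_mul hx.le]
  norm_num

lemma aux_blowup (α c : ℝ) (hα : α < -1) (hc : 0 < c) :
    Tendsto (fun x : ℝ => Real.exp (c * x ^ (1 + α))) (nhdsWithin 0 (Ioi 0)) atTop ∧
    ¬ IntegrableOn (fun x : ℝ => (Real.exp (c * x ^ (1 + α))) ^ 2 * x ^ (-α)) (Ioo 0 1) := by
  have htend := aux_tendsto_rpow α hα
  constructor
  · exact Real.tendsto_exp_atTop.comp (htend.const_mul_atTop hc)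
  · intro hInt
    set β : ℝ := (α - 1) / (1 + α) with hβ
    have h1α : 1 + α < 0 := by linarith
    have hβpos : 0 < β := div_pos_iff.mpr (Or.inr ⟨by linarith, h1α⟩)
    -- eventually exp(2c t) ≥ t ^ β for t → ∞
    have hev : ∀ᶠ t : ℝ in atTop, t ^ β ≤ Real.exp (2 * c * t) := by
      have h := tendsto_exp_mul_div_rpow_atTop β (2 * c) (by linarith)
      filter_upwards [h.eventually_ge_atTop 1, eventually_gt_atTop (0 : ℝ)] with t h1 ht
      have hpow : (0:ℝ) < t ^ β := Real.rpow_pos_of_pos ht β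
      calc t ^ β = 1 * t ^ β := (one_mul _).symm
        _ ≤ (Real.exp (2 * c * t) / t ^ β) * t ^ β := by gcongr
        _ = Real.exp (2 * c * t) := div_mul_cancel₀ _ hpow.ne'
    -- pull back: eventually near 0⁺ the integrand dominates x⁻¹
    have hev2 : ∀ᶠ x : ℝ in nhdsWithin 0 (Ioi 0),
        x ^ (-1 : ℝ) ≤ (Real.exp (c * x ^ (1 + α))) ^ 2 * x ^ (-α) := by
      filter_upwards [htend.eventually hev, self_mem_nhdsWithin] with x hx (hx0 : 0 < x)
      have key : x ^ (α - 1) ≤ Real.exp (2 * c * x ^ (1 + α)) := by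
        have : (x ^ (1 + α)) ^ β = x ^ (α - 1) := by
          rw [← Real.rpow_mul hx0.le, hβ, mul_div_cancel₀ _ h1α.ne]
        linarith [this ▸ hx]
      have hxp : (0:ℝ) < x ^ (-α) := Real.rpow_pos_of_pos hx0 _
      calc x ^ (-1 : ℝ) = x ^ (α - 1) * x ^ (-α) := by
            rw [← Real.rpow_add hx0]; ring_nf
        _ ≤ Real.exp (2 * c * x ^ (1 + α)) * x ^ (-α) := by gcongr
        _ = (Real.exp (c * x ^ (1 + α))) ^ 2 * x ^ (-α) := by
            rw [pow_two, ← Real.exp_add]; ring_nf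
    obtain ⟨u, hu, hsub⟩ := mem_nhdsGT_iff_exists_Ioo_subset.mp hev2
    set δ := min u 1 with hδ
    have hδ0 : 0 < δ := lt_min hu one_pos
    have hδ1 : δ ≤ 1 := min_le_right _ _
    have hIoo : Ioo (0:ℝ) δ ⊆ Ioo 0 1 := Ioo_subset_Ioo le_rfl hδ1
    have hInt' : IntegrableOn (fun x : ℝ => (Real.exp (c * x ^ (1 + α))) ^ 2 * x ^ (-α))
        (Ioo 0 δ) := hInt.mono_set hIoo
    have hIntInv : IntegrableOn (fun x : ℝ => x ^ (-1 : ℝ)) (Ioo 0 δ) := by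
      refine Integrable.mono hInt' ?_ ?_
      · exact (Measurable.aestronglyMeasurable (by measurability)).restrict
      · rw [ae_restrict_iff' measurableSet_Ioo]
        filter_upwards with x hx
        have hx0 : 0 < x := hx.1
        have hle : x ^ (-1 : ℝ) ≤ (Real.exp (c * x ^ (1 + α))) ^ 2 * x ^ (-α) :=
          hsub ⟨hx.1, lt_of_lt_of_le hx.2 (min_le_left _ _)⟩
        have h1 : (0:ℝ) ≤ x ^ (-1 : ℝ) := (Real.rpow_pos_of_pos hx0 _).le
        have h2 : (0:ℝ) ≤ (Real.exp (c * x ^ (1 + α))) ^ 2 * x ^ (-α) :=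
          mul_nonneg (sq_nonneg _) (Real.rpow_pos_of_pos hx0 _).le
        rw [Real.norm_eq_abs, Real.norm_eq_abs, abs_of_nonneg h1, abs_of_nonneg h2]
        exact hle
    have := (intervalIntegral.integrableOn_Ioo_rpow_iff hδ0).mp hIntInv
    linarith

/-- For `α < −1`, `ξ ≠ 0`, exactly one of the two functions `exp(±ξ x^(1+α)/(1+α))`
diverges to `+∞` as `x → 0⁺`, and consequently it is not the case that both solutions
belong to `L²((0,1), x^(−α) dx)`: at least one of the integrals
`∫₀¹ exp(±2ξ x^(1+α)/(1+α)) x^(−α) dx` diverges. -/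
theorem exp_blowup_at_zero (α ξ : ℝ) (hα : α < -1) (hξ : ξ ≠ 0) :
    Xor'
      (Tendsto (fun x : ℝ => Real.exp (ξ * x ^ (1 + α) / (1 + α)))
        (nhdsWithin 0 (Ioi 0)) atTop)
      (Tendsto (fun x : ℝ => Real.exp (-(ξ * x ^ (1 + α) / (1 + α))))
        (nhdsWithin 0 (Ioi 0)) atTop) ∧
    ¬ (IntegrableOn
        (fun x : ℝ => (Real.exp (ξ * x ^ (1 + α) / (1 + α))) ^ 2 * x ^ (-α)) (Ioo 0 1) ∧
       IntegrableOn
        (fun x : ℝ => (Real.exp (-(ξ * x ^ (1 + α) / (1 + α)))) ^ 2 * x ^ (-α)) (Ioo 0 1)) := by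
  have h1α : (1 + α) ≠ 0 := by intro h; linarith
  set c : ℝ := ξ / (1 + α) with hc
  have hcne : c ≠ 0 := div_ne_zero hξ h1α
  have heq : ∀ x : ℝ, ξ * x ^ (1 + α) / (1 + α) = c * x ^ (1 + α) := fun x => by
    rw [hc]; ring
  have heqn : ∀ x : ℝ, -(ξ * x ^ (1 + α) / (1 + α)) = (-c) * x ^ (1 + α) := fun x => by
    rw [hc]; ring
  simp only [heq, heqn]
  rcases hcne.lt_or_gt with hneg | hpos
  · -- c < 0 : the minus-sign solution blows up
    obtain ⟨ht, hni⟩ := aux_blowup α (-c) hα (by linarith)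
    simp only [neg_mul] at ht hni
    constructor
    · refine Or.inr ⟨ht, ?_⟩
      have hT : Tendsto (fun x : ℝ => c * x ^ (1 + α)) (nhdsWithin 0 (Ioi 0)) atBot := by
        have h' := ((aux_tendsto_rpow α hα).const_mul_atTop
          (show (0:ℝ) < -c by linarith))
        exact (tendsto_neg_atTop_atBot.comp h').congr (fun x => by simp only [Function.comp_apply]; ring)
      exact not_tendsto_atTop_of_tendsto_nhds (Real.tendsto_exp_atBot.comp hT)
    · intro h; exact hni h.2
  · obtain ⟨ht, hni⟩ := aux_blowup α c hα hpos
    constructor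
    · refine Or.inl ⟨ht, ?_⟩
      have hT : Tendsto (fun x : ℝ => -(c * x ^ (1 + α))) (nhdsWithin 0 (Ioi 0)) atBot :=
        tendsto_neg_atTop_atBot.comp ((aux_tendsto_rpow α hα).const_mul_atTop hpos)
      exact not_tendsto_atTop_of_tendsto_nhds (Real.tendsto_exp_atBot.comp hT)
    · intro h; exact hni h.1
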